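/- Let M be an invertible m×m real matrix, let σ > 0, let ξ₁,…,ξ_k be nonnegative weights with Σᵢ ξᵢ = 1, and let g₁,…,g_k ∈ ℝˢ. Set fᵢ = (1, σ²gᵢ) ∈ ℝ^{1+s} and f̃ᵢ = (1, gᵢ) ∈ ℝ^{1+s}, and define V = Σᵢ ξᵢ fᵢ fᵢᵀ and Ṽ = Σᵢ ξᵢ f̃ᵢ f̃ᵢᵀ (both (1+s)×(1+s) matrices). Let I be the block-diagonal matrix with diagonal blocks M and (1/(2σ⁴))·V, and let I₁₁ be the block-diagonal matrix with diagonal blocks M and the 1×1 block 1/(2σ⁴). Then det(I)/det(I₁₁) = (1/2)ˢ · det(Ṽ). (Consequently, the D_s-optimality criterion Φ_{D_s}(ξ) = |I|/|I₁₁| for the variance parameters γ is, up to the constant (1/2)ˢ, the D-optimality criterion of the auxiliary linear regression with regressor vector (1, ∇log h(x; γ̃)).) -/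

import Mathlib

open Matrix
open scoped BigOperators

/-- The D_s-optimality criterion |I|/|I₁₁| for the variance parameters equals,
up to the constant (1/2)^s, the D-optimality criterion of the auxiliary linear
regression with regressor vector (1, ∇log h). -/
theorem stmt_0 (m s k : ℕ)
    (M : Matrix (Fin m) (Fin m) ℝ) (hM : IsUnit M.det)
    (σ : ℝ) (hσ : 0 < σ)
    (ξ : Fin k → ℝ) (hξ : ∀ i, 0 ≤ ξ i) (hξ1 : ∑ i, ξ i = 1)
    (g : Fin k → Fin s → ℝ) :
    let f : Fin k → Fin (s + 1) → ℝ := fun i => Fin.cons 1 (fun j => σ ^ 2 * g i j)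
    let ftil : Fin k → Fin (s + 1) → ℝ := fun i => Fin.cons 1 (g i)
    let V : Matrix (Fin (s + 1)) (Fin (s + 1)) ℝ := ∑ i, ξ i • vecMulVec (f i) (f i)
    let Vtil : Matrix (Fin (s + 1)) (Fin (s + 1)) ℝ := ∑ i, ξ i • vecMulVec (ftil i) (ftil i)
    let I : Matrix (Fin m ⊕ Fin (s + 1)) (Fin m ⊕ Fin (s + 1)) ℝ :=
      fromBlocks M 0 0 ((1 / (2 * σ ^ 4)) • V)
    let I11 : Matrix (Fin m ⊕ Fin 1) (Fin m ⊕ Fin 1) ℝ :=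
      fromBlocks M 0 0 ((1 / (2 * σ ^ 4)) • (1 : Matrix (Fin 1) (Fin 1) ℝ))
    I.det / I11.det = (1 / 2) ^ s * Vtil.det := by
  intro f ftil V Vtil I I11
  have hσ0 : σ ≠ 0 := ne_of_gt hσ
  set d : Fin (s + 1) → ℝ := Fin.cons 1 (fun _ => σ ^ 2) with hd
  have hfd : ∀ i j, f i j = d j * ftil i j := by
    intro i j
    refine Fin.cases ?_ ?_ j <;> simp [f, ftil, hd]
  have hV : V = diagonal d * Vtil * diagonal d := by
    ext j l
    simp only [V, Vtil, Matrix.mul_diagonal, Matrix.diagonal_mul, Matrix.sum_apply,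
      Matrix.smul_apply, vecMulVec_apply, smul_eq_mul, Finset.sum_mul, Finset.mul_sum]
    refine Finset.sum_congr rfl fun i _ => ?_
    rw [hfd, hfd]; ring
  have hdd : (diagonal d).det = (σ ^ 2) ^ s := by
    simp [Matrix.det_diagonal, hd, Fin.prod_cons]
  have hVdet : V.det = (σ ^ 2) ^ s * ((σ ^ 2) ^ s * Vtil.det) := by
    rw [hV, Matrix.det_mul, Matrix.det_mul, hdd]; ring
  have hMne : M.det ≠ 0 := hM.ne_zero
  have hI : I.det = M.det * ((1 / (2 * σ ^ 4)) ^ (s + 1) * V.det) := by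
    simp [I, Matrix.det_fromBlocks_zero₁₂, Matrix.det_smul]
  have hI11 : I11.det = M.det * (1 / (2 * σ ^ 4)) := by
    simp [I11, Matrix.det_fromBlocks_zero₁₂, Matrix.det_smul]
  rw [hI, hI11, hVdet]
  rw [mul_div_mul_left _ _ hMne]
  have h2 : (2 * σ ^ 4) ≠ 0 := by positivity
  field_simp
  ring_nf
  have h : σ ^ 4 * σ ^ (s * 4) * σ⁻¹ ^ 4 * σ⁻¹ ^ (s * 4) = 1 := by
    rw [mul_assoc, mul_assoc, ← mul_assoc (σ ^ (s*4)), mul_comm (σ ^ (s*4)), mul_assoc, ← mul_pow, mul_inv_cancel₀ hσ0, one_pow, mul_one, ← mul_pow, mul_inv_cancel₀ hσ0, one_pow]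
  rw [h, one_mul]
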